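/- Fix m, l, g > 0 and let ρ ∈ ℝ satisfy 0 < ρ < m. Then the upright equilibrium x_e = (Ω₁, Ω₂, v, Γ) = (0, 0, 0, e₃) of the spherical-pendulum closed-loop system is Lyapunov stable: for every ε > 0 there exists δ > 0 such that every solution (Ω₁, Ω₂, v, Γ) : ℝ → ℝ × ℝ × ℝ³ × ℝ³ of the spherical-pendulum closed-loop system whose initial value satisfies ‖(Ω₁(0), Ω₂(0), v(0), Γ(0)) − x_e‖ < δ satisfies ‖(Ω₁(t), Ω₂(t), v(t), Γ(t)) − x_e‖ < ε for all t ≥ 0. -/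

import Mathlib

open Matrix

/-- The spherical-pendulum closed-loop system: with `Ω = (Ω₁, Ω₂, 0)`,
`μ = (m l² Ω₁ − m l v₂, m l² Ω₂ + m l v₁, 0)` and
`p = (ρ v₁ + m l Ω₂, ρ v₂ − m l Ω₁, ρ v₃)`, the first two components of
`μ' = μ × Ω + p × v − m g l (e₃ × Γ)` hold, together with `p' = p × Ω` and
`Γ' = Γ × Ω`. -/
def SphPendCL (m l g ρ : ℝ) (Ω₁ Ω₂ : ℝ → ℝ) (v Γ : ℝ → Fin 3 → ℝ) : Prop :=
  let Ω : ℝ → Fin 3 → ℝ := fun t => ![Ω₁ t, Ω₂ t, 0]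
  let μ : ℝ → Fin 3 → ℝ := fun t =>
    ![m * l ^ 2 * Ω₁ t - m * l * v t 1, m * l ^ 2 * Ω₂ t + m * l * v t 0, 0]
  let p : ℝ → Fin 3 → ℝ := fun t =>
    ![ρ * v t 0 + m * l * Ω₂ t, ρ * v t 1 - m * l * Ω₁ t, ρ * v t 2]
  Differentiable ℝ Ω₁ ∧ Differentiable ℝ Ω₂ ∧ Differentiable ℝ v ∧ Differentiable ℝ Γ ∧
  (∀ t, deriv μ t 0
      = (μ t ⨯₃ Ω t + p t ⨯₃ v t - (m * g * l) • (![(0 : ℝ), 0, 1] ⨯₃ Γ t)) 0) ∧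
  (∀ t, deriv μ t 1
      = (μ t ⨯₃ Ω t + p t ⨯₃ v t - (m * g * l) • (![(0 : ℝ), 0, 1] ⨯₃ Γ t)) 1) ∧
  (∀ t, deriv p t = p t ⨯₃ Ω t) ∧
  (∀ t, deriv Γ t = Γ t ⨯₃ Ω t)

/-- The algebraic core: along solutions, the derivative of the Lyapunov function
vanishes.  All derivatives appear as free scalar variables. -/
lemma sphPend_alg (m l g ρ k c O1 O2 v0 v1 v2 G0 G1 G2 a b w0 w1 w2 γ0 γ1 γ2 : ℝ)
    (hρ : ρ ≠ 0)
    (hk2 : 2 * ρ * k = m * l ^ 2 * (m - ρ)) (hc2 : 2 * c = m * g * l)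
    (e1 : m * l ^ 2 * a - m * l * w1 = (ρ * v1 - m * l * O1) * v2 - ρ * v2 * v1 + m * g * l * G1)
    (e2 : m * l ^ 2 * b + m * l * w0 = ρ * v2 * v0 - (ρ * v0 + m * l * O2) * v2 - m * g * l * G0)
    (e3 : ρ * w0 + m * l * b = -(ρ * v2 * O2))
    (e4 : ρ * w1 - m * l * a = ρ * v2 * O1)
    (e5 : ρ * w2 = (ρ * v0 + m * l * O2) * O2 - (ρ * v1 - m * l * O1) * O1)
    (e6 : γ0 = -(G2 * O2)) (e7 : γ1 = G2 * O1) (e8 : γ2 = G0 * O2 - G1 * O1) :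
    k * (a * O1 + O1 * a + (b * O2 + O2 * b))
      + c * (γ0 * G0 + G0 * γ0 + (γ1 * G1 + G1 * γ1) + (γ2 * (G2 - 1) + (G2 - 1) * γ2))
      + ((ρ * w0 + m * l * b) * (ρ * v0 + m * l * O2)
          + (ρ * v0 + m * l * O2) * (ρ * w0 + m * l * b)
        + ((ρ * w1 - m * l * a) * (ρ * v1 - m * l * O1)
          + (ρ * v1 - m * l * O1) * (ρ * w1 - m * l * a))
        + (ρ * w2 * (ρ * v2) + ρ * v2 * (ρ * w2))) = 0 := by
  have h2 : (2 * ρ) * (k * (a * O1 + O1 * a + (b * O2 + O2 * b))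
      + c * (γ0 * G0 + G0 * γ0 + (γ1 * G1 + G1 * γ1) + (γ2 * (G2 - 1) + (G2 - 1) * γ2))
      + ((ρ * w0 + m * l * b) * (ρ * v0 + m * l * O2)
          + (ρ * v0 + m * l * O2) * (ρ * w0 + m * l * b)
        + ((ρ * w1 - m * l * a) * (ρ * v1 - m * l * O1)
          + (ρ * v1 - m * l * O1) * (ρ * w1 - m * l * a))
        + (ρ * w2 * (ρ * v2) + ρ * v2 * (ρ * w2)))) = 0 := by
    linear_combination (2 * (a * O1 + b * O2)) * hk2
      + (ρ * (2 * (γ0 * G0 + γ1 * G1 + γ2 * (G2 - 1)))) * hc2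
      + (-2 * ρ * O1) * e1 + (-2 * ρ * O2) * e2
      + (4 * ρ * (ρ * v0 + m * l * O2) + 2 * m * l * O2) * e3
      + (4 * ρ * (ρ * v1 - m * l * O1) - 2 * m * l * O1) * e4
      + (4 * ρ * (ρ * v2)) * e5
      + (2 * ρ * m * g * l * G0) * e6 + (2 * ρ * m * g * l * G1) * e7
      + (2 * ρ * m * g * l * (G2 - 1)) * e8
  exact (mul_eq_zero.mp h2).resolve_left (mul_ne_zero two_ne_zero hρ)

/-- The Lyapunov function is constant along solutions. -/
lemma sphPend_conserved (m l g ρ : ℝ) (hρ : ρ ≠ 0)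
    (Ω₁ Ω₂ : ℝ → ℝ) (v Γ : ℝ → Fin 3 → ℝ)
    (h : SphPendCL m l g ρ Ω₁ Ω₂ v Γ) (k c : ℝ)
    (hk2 : 2 * ρ * k = m * l ^ 2 * (m - ρ)) (hc2 : 2 * c = m * g * l) (t : ℝ) :
    k * (Ω₁ t * Ω₁ t + Ω₂ t * Ω₂ t)
      + c * (Γ t 0 * Γ t 0 + Γ t 1 * Γ t 1 + (Γ t 2 - 1) * (Γ t 2 - 1))
      + ((ρ * v t 0 + m * l * Ω₂ t) * (ρ * v t 0 + m * l * Ω₂ t)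
        + (ρ * v t 1 - m * l * Ω₁ t) * (ρ * v t 1 - m * l * Ω₁ t)
        + (ρ * v t 2) * (ρ * v t 2))
    = k * (Ω₁ 0 * Ω₁ 0 + Ω₂ 0 * Ω₂ 0)
      + c * (Γ 0 0 * Γ 0 0 + Γ 0 1 * Γ 0 1 + (Γ 0 2 - 1) * (Γ 0 2 - 1))
      + ((ρ * v 0 0 + m * l * Ω₂ 0) * (ρ * v 0 0 + m * l * Ω₂ 0)
        + (ρ * v 0 1 - m * l * Ω₁ 0) * (ρ * v 0 1 - m * l * Ω₁ 0)
        + (ρ * v 0 2) * (ρ * v 0 2)) := by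
  obtain ⟨hΩ₁, hΩ₂, hv, hΓ, hμ0, hμ1, hp, hΓd⟩ := h
  have key : ∀ s : ℝ, HasDerivAt (fun s => k * (Ω₁ s * Ω₁ s + Ω₂ s * Ω₂ s)
      + c * (Γ s 0 * Γ s 0 + Γ s 1 * Γ s 1 + (Γ s 2 - 1) * (Γ s 2 - 1))
      + ((ρ * v s 0 + m * l * Ω₂ s) * (ρ * v s 0 + m * l * Ω₂ s)
        + (ρ * v s 1 - m * l * Ω₁ s) * (ρ * v s 1 - m * l * Ω₁ s)
        + (ρ * v s 2) * (ρ * v s 2))) 0 s := by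
    intro s
    have ha := (hΩ₁ s).hasDerivAt
    have hb := (hΩ₂ s).hasDerivAt
    have hv0 : HasDerivAt (fun u => v u 0) (deriv v s 0) s := hasDerivAt_pi.1 (hv s).hasDerivAt 0
    have hv1 : HasDerivAt (fun u => v u 1) (deriv v s 1) s := hasDerivAt_pi.1 (hv s).hasDerivAt 1
    have hv2 : HasDerivAt (fun u => v u 2) (deriv v s 2) s := hasDerivAt_pi.1 (hv s).hasDerivAt 2
    have hG0 : HasDerivAt (fun u => Γ u 0) (deriv Γ s 0) s := hasDerivAt_pi.1 (hΓ s).hasDerivAt 0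
    have hG1 : HasDerivAt (fun u => Γ u 1) (deriv Γ s 1) s := hasDerivAt_pi.1 (hΓ s).hasDerivAt 1
    have hG2 : HasDerivAt (fun u => Γ u 2) (deriv Γ s 2) s := hasDerivAt_pi.1 (hΓ s).hasDerivAt 2
    have hμd : HasDerivAt (fun t => ![m * l ^ 2 * Ω₁ t - m * l * v t 1,
          m * l ^ 2 * Ω₂ t + m * l * v t 0, (0:ℝ)])
        (![m * l ^ 2 * deriv Ω₁ s - m * l * deriv v s 1,
          m * l ^ 2 * deriv Ω₂ s + m * l * deriv v s 0, 0]) s := by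
      apply hasDerivAt_pi.2
      intro i; fin_cases i
      · simp; exact (ha.const_mul (m * l ^ 2)).sub (hv1.const_mul (m * l))
      · simp; exact (hb.const_mul (m * l ^ 2)).add (hv0.const_mul (m * l))
      · simpa using hasDerivAt_const s (0:ℝ)
    have hpd : HasDerivAt (fun t => ![ρ * v t 0 + m * l * Ω₂ t,
          ρ * v t 1 - m * l * Ω₁ t, ρ * v t 2])
        (![ρ * deriv v s 0 + m * l * deriv Ω₂ s,
          ρ * deriv v s 1 - m * l * deriv Ω₁ s, ρ * deriv v s 2]) s := by
      apply hasDerivAt_pi.2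
      intro i; fin_cases i
      · simp; exact (hv0.const_mul ρ).add (hb.const_mul (m * l))
      · simp; exact (hv1.const_mul ρ).sub (ha.const_mul (m * l))
      · simpa using hv2.const_mul ρ
    have e1 := hμ0 s; rw [hμd.deriv] at e1; simp [cross_apply] at e1
    have e2 := hμ1 s; rw [hμd.deriv] at e2; simp [cross_apply] at e2
    have e3 := congrFun (hp s) 0; rw [hpd.deriv] at e3; simp [cross_apply] at e3
    have e4 := congrFun (hp s) 1; rw [hpd.deriv] at e4; simp [cross_apply] at e4
    have e5 := congrFun (hp s) 2; rw [hpd.deriv] at e5; simp [cross_apply] at e5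
    have e6 := congrFun (hΓd s) 0; simp [cross_apply] at e6
    have e7 := congrFun (hΓd s) 1; simp [cross_apply] at e7
    have e8 := congrFun (hΓd s) 2; simp [cross_apply] at e8
    have H : HasDerivAt (fun s => k * (Ω₁ s * Ω₁ s + Ω₂ s * Ω₂ s)
        + c * (Γ s 0 * Γ s 0 + Γ s 1 * Γ s 1 + (Γ s 2 - 1) * (Γ s 2 - 1))
        + ((ρ * v s 0 + m * l * Ω₂ s) * (ρ * v s 0 + m * l * Ω₂ s)
          + (ρ * v s 1 - m * l * Ω₁ s) * (ρ * v s 1 - m * l * Ω₁ s)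
          + (ρ * v s 2) * (ρ * v s 2)))
        (k * (deriv Ω₁ s * Ω₁ s + Ω₁ s * deriv Ω₁ s
            + (deriv Ω₂ s * Ω₂ s + Ω₂ s * deriv Ω₂ s))
        + c * (deriv Γ s 0 * Γ s 0 + Γ s 0 * deriv Γ s 0
            + (deriv Γ s 1 * Γ s 1 + Γ s 1 * deriv Γ s 1)
            + (deriv Γ s 2 * (Γ s 2 - 1) + (Γ s 2 - 1) * deriv Γ s 2))
        + ((ρ * deriv v s 0 + m * l * deriv Ω₂ s) * (ρ * v s 0 + m * l * Ω₂ s)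
              + (ρ * v s 0 + m * l * Ω₂ s) * (ρ * deriv v s 0 + m * l * deriv Ω₂ s)
          + ((ρ * deriv v s 1 - m * l * deriv Ω₁ s) * (ρ * v s 1 - m * l * Ω₁ s)
              + (ρ * v s 1 - m * l * Ω₁ s) * (ρ * deriv v s 1 - m * l * deriv Ω₁ s))
          + (ρ * deriv v s 2 * (ρ * v s 2) + ρ * v s 2 * (ρ * deriv v s 2)))) s := by
      have hΩsq := (ha.mul ha).add (hb.mul hb)
      have hG2' := hG2.sub_const 1
      have hGsq := ((hG0.mul hG0).add (hG1.mul hG1)).add (hG2'.mul hG2')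
      have hp0 := (hv0.const_mul ρ).add (hb.const_mul (m * l))
      have hp1 := (hv1.const_mul ρ).sub (ha.const_mul (m * l))
      have hp2 := hv2.const_mul ρ
      exact ((hΩsq.const_mul k).add (hGsq.const_mul c)).add
        (((hp0.mul hp0).add (hp1.mul hp1)).add (hp2.mul hp2))
    have hz := sphPend_alg m l g ρ k c (Ω₁ s) (Ω₂ s) (v s 0) (v s 1) (v s 2)
      (Γ s 0) (Γ s 1) (Γ s 2) (deriv Ω₁ s) (deriv Ω₂ s)
      (deriv v s 0) (deriv v s 1) (deriv v s 2)
      (deriv Γ s 0) (deriv Γ s 1) (deriv Γ s 2) hρ hk2 hc2 e1 e2 e3 e4 e5 e6 e7 e8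
    exact hz ▸ H
  exact is_const_of_deriv_eq_zero (fun s => (key s).differentiableAt)
    (fun s => (key s).deriv) t 0

/-- Lower quadratic bound on the Lyapunov function. -/
lemma sphPend_bound_low (m l ρ c k c₁ O1 O2 v0 v1 v2 G0 G1 G2 : ℝ)
    (hρ : 0 < ρ) (hc₁c : c₁ ≤ c) (hc₁ρ : 2 * c₁ ≤ ρ ^ 2)
    (hc₁k : c₁ * (ρ ^ 2 + 2 * m ^ 2 * l ^ 2) ≤ k * ρ ^ 2) (hc₁0 : 0 ≤ c₁) :
    c₁ * (O1 ^ 2 + O2 ^ 2 + (v0 ^ 2 + v1 ^ 2 + v2 ^ 2) + (G0 ^ 2 + G1 ^ 2 + (G2 - 1) ^ 2))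
      ≤ k * (O1 * O1 + O2 * O2) + c * (G0 * G0 + G1 * G1 + (G2 - 1) * (G2 - 1))
      + ((ρ * v0 + m * l * O2) * (ρ * v0 + m * l * O2)
        + (ρ * v1 - m * l * O1) * (ρ * v1 - m * l * O1) + (ρ * v2) * (ρ * v2)) := by
  have hP : (0:ℝ) ≤ (ρ * v0 + m * l * O2) ^ 2 + (ρ * v1 - m * l * O1) ^ 2 + (ρ * v2) ^ 2 := by
    positivity
  have hA : (0:ℝ) ≤ O1 ^ 2 + O2 ^ 2 := by positivity
  have hG : (0:ℝ) ≤ G0 ^ 2 + G1 ^ 2 + (G2 - 1) ^ 2 := by positivity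
  have h1 : ρ ^ 2 * (v0 ^ 2 + v1 ^ 2 + v2 ^ 2)
      ≤ 2 * ((ρ * v0 + m * l * O2) ^ 2 + (ρ * v1 - m * l * O1) ^ 2 + (ρ * v2) ^ 2)
        + 2 * m ^ 2 * l ^ 2 * (O1 ^ 2 + O2 ^ 2) := by
    nlinarith [sq_nonneg (ρ * v0 + 2 * m * l * O2), sq_nonneg (ρ * v1 - 2 * m * l * O1),
      sq_nonneg (ρ * v2), sq_nonneg (m * l * O1), sq_nonneg (m * l * O2)]
  have hρ2 : (0:ℝ) < ρ ^ 2 := by positivity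
  have Hs : ρ ^ 2 * (c₁ * (O1 ^ 2 + O2 ^ 2 + (v0 ^ 2 + v1 ^ 2 + v2 ^ 2)
        + (G0 ^ 2 + G1 ^ 2 + (G2 - 1) ^ 2)))
      ≤ ρ ^ 2 * (k * (O1 * O1 + O2 * O2) + c * (G0 * G0 + G1 * G1 + (G2 - 1) * (G2 - 1))
      + ((ρ * v0 + m * l * O2) * (ρ * v0 + m * l * O2)
        + (ρ * v1 - m * l * O1) * (ρ * v1 - m * l * O1) + (ρ * v2) * (ρ * v2))) := by
    nlinarith [mul_le_mul_of_nonneg_left h1 hc₁0,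
      mul_le_mul_of_nonneg_right hc₁ρ hP,
      mul_le_mul_of_nonneg_right hc₁k hA,
      mul_le_mul_of_nonneg_right hc₁c hG,
      mul_le_mul_of_nonneg_left (mul_le_mul_of_nonneg_right hc₁c hG) hρ2.le]
  exact le_of_mul_le_mul_left Hs hρ2

/-- Upper quadratic bound on the Lyapunov function. -/
lemma sphPend_bound_up (m l ρ c k c₂ O1 O2 v0 v1 v2 G0 G1 G2 : ℝ)
    (hk0 : 0 ≤ k) (hc0 : 0 ≤ c)
    (hc₂ : c₂ = k + c + 2 * ρ ^ 2 + 2 * m ^ 2 * l ^ 2) :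
    k * (O1 * O1 + O2 * O2) + c * (G0 * G0 + G1 * G1 + (G2 - 1) * (G2 - 1))
      + ((ρ * v0 + m * l * O2) * (ρ * v0 + m * l * O2)
        + (ρ * v1 - m * l * O1) * (ρ * v1 - m * l * O1) + (ρ * v2) * (ρ * v2))
      ≤ c₂ * (O1 ^ 2 + O2 ^ 2 + (v0 ^ 2 + v1 ^ 2 + v2 ^ 2)
          + (G0 ^ 2 + G1 ^ 2 + (G2 - 1) ^ 2)) := by
  subst hc₂
  nlinarith [sq_nonneg (ρ * v0 - m * l * O2), sq_nonneg (ρ * v1 + m * l * O1),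
    sq_nonneg (ρ * v2), sq_nonneg O1, sq_nonneg O2, sq_nonneg v0, sq_nonneg v1, sq_nonneg v2,
    sq_nonneg G0, sq_nonneg G1, sq_nonneg (G2 - 1),
    mul_nonneg hk0 (by positivity : (0:ℝ) ≤ v0 ^ 2 + v1 ^ 2 + v2 ^ 2 + (G0 ^ 2 + G1 ^ 2 + (G2 - 1) ^ 2)),
    mul_nonneg hc0 (by positivity : (0:ℝ) ≤ O1 ^ 2 + O2 ^ 2 + (v0 ^ 2 + v1 ^ 2 + v2 ^ 2)),
    mul_nonneg (by positivity : (0:ℝ) ≤ ρ ^ 2) (by positivity : (0:ℝ) ≤ G0 ^ 2 + G1 ^ 2 + (G2 - 1) ^ 2),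
    mul_nonneg (by positivity : (0:ℝ) ≤ m ^ 2 * l ^ 2) (by positivity : (0:ℝ) ≤ v0 ^ 2 + v1 ^ 2 + v2 ^ 2 + (G0 ^ 2 + G1 ^ 2 + (G2 - 1) ^ 2))]

/-- Lyapunov stability of the upright equilibrium `(Ω₁, Ω₂, v, Γ) = (0, 0, 0, e₃)` of
the spherical-pendulum closed-loop system, for any kinetic-shaping parameter
`0 < ρ < m`.  The distance is the Euclidean norm on `ℝ⁸`. -/
theorem sphPend_upright_stable (m l g ρ : ℝ) (hm : 0 < m) (hl : 0 < l) (hg : 0 < g)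
    (hρ : 0 < ρ) (hρm : ρ < m) :
    ∀ ε > (0 : ℝ), ∃ δ > (0 : ℝ),
      ∀ (Ω₁ Ω₂ : ℝ → ℝ) (v Γ : ℝ → Fin 3 → ℝ), SphPendCL m l g ρ Ω₁ Ω₂ v Γ →
        Real.sqrt ((Ω₁ 0) ^ 2 + (Ω₂ 0) ^ 2 + v 0 ⬝ᵥ v 0
            + (Γ 0 - ![(0 : ℝ), 0, 1]) ⬝ᵥ (Γ 0 - ![(0 : ℝ), 0, 1])) < δ →
        ∀ t ≥ (0 : ℝ),
          Real.sqrt ((Ω₁ t) ^ 2 + (Ω₂ t) ^ 2 + v t ⬝ᵥ v t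
            + (Γ t - ![(0 : ℝ), 0, 1]) ⬝ᵥ (Γ t - ![(0 : ℝ), 0, 1])) < ε := by
  intro ε hε
  have hmρ : (0:ℝ) < m - ρ := by linarith
  set k : ℝ := m * l ^ 2 * (m - ρ) / (2 * ρ) with hkdef
  set c : ℝ := m * g * l / 2 with hcdef
  have hρ0 : (ρ:ℝ) ≠ 0 := ne_of_gt hρ
  have hkpos : 0 < k := by rw [hkdef]; positivity
  have hcpos : 0 < c := by rw [hcdef]; positivity
  have hk2 : 2 * ρ * k = m * l ^ 2 * (m - ρ) := by
    rw [hkdef]; field_simp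
  have hc2 : 2 * c = m * g * l := by rw [hcdef]; ring
  set c₁ : ℝ := min c (min (k * ρ ^ 2 / (ρ ^ 2 + 2 * m ^ 2 * l ^ 2)) (ρ ^ 2 / 2)) with hc₁def
  set c₂ : ℝ := k + c + 2 * ρ ^ 2 + 2 * m ^ 2 * l ^ 2 with hc₂def
  have hc₁pos : 0 < c₁ := by
    apply lt_min hcpos
    exact lt_min (div_pos (by positivity) (by positivity)) (by positivity)
  have hc₂pos : 0 < c₂ := by rw [hc₂def]; positivity
  have hc₁c : c₁ ≤ c := min_le_left _ _
  have hc₁ρ : 2 * c₁ ≤ ρ ^ 2 := by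
    have := (min_le_right c _).trans (min_le_right (k * ρ ^ 2 / (ρ ^ 2 + 2 * m ^ 2 * l ^ 2)) (ρ ^ 2 / 2))
    linarith
  have hc₁k : c₁ * (ρ ^ 2 + 2 * m ^ 2 * l ^ 2) ≤ k * ρ ^ 2 := by
    have h := (min_le_right c (min (k * ρ ^ 2 / (ρ ^ 2 + 2 * m ^ 2 * l ^ 2)) (ρ ^ 2 / 2))).trans
      (min_le_left (k * ρ ^ 2 / (ρ ^ 2 + 2 * m ^ 2 * l ^ 2)) (ρ ^ 2 / 2))
    have hd : (0:ℝ) < ρ ^ 2 + 2 * m ^ 2 * l ^ 2 := by positivity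
    calc c₁ * (ρ ^ 2 + 2 * m ^ 2 * l ^ 2)
        ≤ k * ρ ^ 2 / (ρ ^ 2 + 2 * m ^ 2 * l ^ 2) * (ρ ^ 2 + 2 * m ^ 2 * l ^ 2) :=
          mul_le_mul_of_nonneg_right h hd.le
      _ = k * ρ ^ 2 := by field_simp
  clear_value k c c₁ c₂
  refine ⟨ε * Real.sqrt (c₁ / c₂), by positivity, ?_⟩
  intro Ω₁ Ω₂ v Γ hsol h0 t ht
  have hNF : ∀ s : ℝ, (Ω₁ s) ^ 2 + (Ω₂ s) ^ 2 + v s ⬝ᵥ v s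
      + (Γ s - ![(0 : ℝ), 0, 1]) ⬝ᵥ (Γ s - ![(0 : ℝ), 0, 1])
      = (Ω₁ s) ^ 2 + (Ω₂ s) ^ 2 + (v s 0 ^ 2 + v s 1 ^ 2 + v s 2 ^ 2)
      + ((Γ s 0) ^ 2 + (Γ s 1) ^ 2 + (Γ s 2 - 1) ^ 2) := by
    intro s
    simp only [dotProduct, Fin.sum_univ_three, Pi.sub_apply, Matrix.cons_val_zero,
      Matrix.cons_val_one, Matrix.head_cons, Matrix.cons_val_two, Matrix.tail_cons]
    ring
  have hfin := sphPend_conserved m l g ρ hρ0 Ω₁ Ω₂ v Γ hsol k c hk2 hc2 t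
  have hlow := sphPend_bound_low m l ρ c k c₁ (Ω₁ t) (Ω₂ t) (v t 0) (v t 1) (v t 2)
    (Γ t 0) (Γ t 1) (Γ t 2) hρ hc₁c hc₁ρ hc₁k hc₁pos.le
  have hup := sphPend_bound_up m l ρ c k c₂ (Ω₁ 0) (Ω₂ 0) (v 0 0) (v 0 1) (v 0 2)
    (Γ 0 0) (Γ 0 1) (Γ 0 2) hkpos.le hcpos.le hc₂def
  rw [hNF] at h0 ⊢
  set N0 : ℝ := (Ω₁ 0) ^ 2 + (Ω₂ 0) ^ 2 + (v 0 0 ^ 2 + v 0 1 ^ 2 + v 0 2 ^ 2)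
      + ((Γ 0 0) ^ 2 + (Γ 0 1) ^ 2 + (Γ 0 2 - 1) ^ 2) with hN0def
  set Nt : ℝ := (Ω₁ t) ^ 2 + (Ω₂ t) ^ 2 + (v t 0 ^ 2 + v t 1 ^ 2 + v t 2 ^ 2)
      + ((Γ t 0) ^ 2 + (Γ t 1) ^ 2 + (Γ t 2 - 1) ^ 2) with hNtdef
  have hN0nonneg : 0 ≤ N0 := by rw [hN0def]; positivity
  have hNtnonneg : 0 ≤ Nt := by rw [hNtdef]; positivity
  clear_value N0 Nt
  have hN0lt : N0 < (ε * Real.sqrt (c₁ / c₂)) ^ 2 := by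
    exact Real.lt_sq_of_sqrt_lt h0
  have hδsq : (ε * Real.sqrt (c₁ / c₂)) ^ 2 = ε ^ 2 * (c₁ / c₂) := by
    rw [mul_pow, Real.sq_sqrt (by positivity : (0:ℝ) ≤ c₁ / c₂)]
  have h4 : c₂ * (ε ^ 2 * (c₁ / c₂)) = c₁ * ε ^ 2 := by
    field_simp
  have hNtlt : Nt < ε ^ 2 := by
    have hchain : c₁ * Nt < c₁ * ε ^ 2 := by
      calc c₁ * Nt ≤ _ := hlow
        _ = _ := hfin
        _ ≤ c₂ * N0 := hup
        _ < c₂ * (ε ^ 2 * (c₁ / c₂)) := by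
            rw [← hδsq]; exact (mul_lt_mul_iff_right₀ hc₂pos).2 hN0lt
        _ = c₁ * ε ^ 2 := h4
    exact lt_of_mul_lt_mul_left hchain hc₁pos.le
  calc Real.sqrt Nt < Real.sqrt (ε ^ 2) := Real.sqrt_lt_sqrt hNtnonneg hNtlt
    _ = ε := Real.sqrt_sq hε.le
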